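/- Let ε_N = C/√N, ε_M = C/√M for a constant C > 0, let N, M ∈ ℕ with M = ⌈λN⌉ for λ > 0, and define ρ(λ) = C(1 + √λ)/((1 + λ)√N) + I·λ/(1+λ) for a constant I ≥ 0 (the distribution discrepancy). If I ≥ C/√N then ρ is minimized over λ ∈ [0, ∞) at λ = 0; if I < C/√N then inf_{λ ≥ 0} ρ(λ) is approached as λ → ∞ with limit I. -/

import Mathlib

/-- Degenerate optimum of the traditional mixed-data bound: if the discrepancy
`I` is at least `C/√N` then `ρ` is minimized at `λ = 0`; otherwise the infimum
`I` is only approached as `λ → ∞`. -/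
theorem stmt13 (C I : ℝ) (hC : 0 < C) (hI : 0 ≤ I) (N : ℕ) (hN : 0 < N) :
    let ρ : ℝ → ℝ := fun lam =>
      C * (1 + Real.sqrt lam) / ((1 + lam) * Real.sqrt N) + I * lam / (1 + lam)
    ((C / Real.sqrt N ≤ I) → ∀ lam ≥ (0 : ℝ), ρ 0 ≤ ρ lam) ∧
      ((I < C / Real.sqrt N) →
        Filter.Tendsto ρ Filter.atTop (nhds I) ∧ ∀ lam ≥ (0 : ℝ), I < ρ lam) := by
  intro ρ
  have hsN : (0:ℝ) < Real.sqrt N := Real.sqrt_pos.mpr (by exact_mod_cast hN)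
  constructor
  · intro h lam hlam
    have hs : 0 ≤ Real.sqrt lam := Real.sqrt_nonneg lam
    have hss : Real.sqrt lam * Real.sqrt lam = lam := Real.mul_self_sqrt hlam
    have h1 : (0:ℝ) < 1 + lam := by linarith
    have hρ0 : ρ 0 = C / Real.sqrt N := by
      simp [ρ, Real.sqrt_zero]
    rw [hρ0]
    show C / Real.sqrt N ≤
      C * (1 + Real.sqrt lam) / ((1 + lam) * Real.sqrt N) + I * lam / (1 + lam)
    rw [div_add_div _ _ (by positivity) (ne_of_gt h1),
      div_le_div_iff₀ hsN (by positivity)]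
    have hIC : C ≤ I * Real.sqrt N := by
      rw [div_le_iff₀ hsN] at h; linarith
    have hred : C * ((1 + lam) * Real.sqrt N) ≤
        (C * (1 + Real.sqrt lam) + Real.sqrt N * (I * lam)) * Real.sqrt N := by
      nlinarith [mul_le_mul_of_nonneg_right hIC (mul_nonneg hlam hsN.le),
        mul_nonneg (mul_nonneg hC.le hs) hsN.le]
    nlinarith [mul_le_mul_of_nonneg_left hred h1.le]
  · intro h
    have hICs : I * Real.sqrt N < C := by
      rw [lt_div_iff₀ hsN] at h; exact h
    constructor
    · have hsqrt : Filter.Tendsto Real.sqrt Filter.atTop Filter.atTop := by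
        refine Filter.tendsto_atTop_atTop.mpr fun b => ⟨max 0 (b ^ 2), fun a ha => ?_⟩
        have hb2 : b ^ 2 ≤ a := le_trans (le_max_right _ _) ha
        calc b ≤ |b| := le_abs_self b
          _ = Real.sqrt (b ^ 2) := (Real.sqrt_sq_eq_abs b).symm
          _ ≤ Real.sqrt a := Real.sqrt_le_sqrt hb2
      have hfrac1 : Filter.Tendsto (fun lam : ℝ => (1 + Real.sqrt lam) / (1 + lam))
          Filter.atTop (nhds 0) := by
        have hub : Filter.Tendsto (fun lam : ℝ => 2 / Real.sqrt lam)
            Filter.atTop (nhds 0) := by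
          have h2 := (tendsto_inv_atTop_zero.comp hsqrt).const_mul (2:ℝ)
          simp only [mul_zero] at h2
          exact h2.congr fun x => by simp [Function.comp, div_eq_mul_inv]
        refine tendsto_of_tendsto_of_tendsto_of_le_of_le' tendsto_const_nhds hub ?_ ?_
        · filter_upwards [Filter.eventually_ge_atTop (0:ℝ)] with lam hlam
          positivity
        · filter_upwards [Filter.eventually_ge_atTop (1:ℝ)] with lam hlam
          have hlam0 : (0:ℝ) ≤ lam := by linarith
          have hs1 : (1:ℝ) ≤ Real.sqrt lam := by
            rw [show (1:ℝ) = Real.sqrt 1 by simp]; exact Real.sqrt_le_sqrt hlam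
          have hss : Real.sqrt lam * Real.sqrt lam = lam := Real.mul_self_sqrt hlam0
          rw [div_le_div_iff₀ (by linarith) (by positivity)]
          nlinarith
      have hfrac2 : Filter.Tendsto (fun lam : ℝ => lam / (1 + lam))
          Filter.atTop (nhds 1) := by
        have hinv : Filter.Tendsto (fun lam : ℝ => (1 + lam)⁻¹)
            Filter.atTop (nhds 0) :=
          tendsto_inv_atTop_zero.comp
            (Filter.tendsto_atTop_add_const_left _ 1 Filter.tendsto_id)
        have hsub : Filter.Tendsto (fun lam : ℝ => 1 - (1 + lam)⁻¹)
            Filter.atTop (nhds (1 - 0)) := tendsto_const_nhds.sub hinv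
        rw [sub_zero] at hsub
        refine Filter.Tendsto.congr' ?_ hsub
        filter_upwards [Filter.eventually_gt_atTop (0:ℝ)] with lam hlam
        have h1 : (1 + lam) ≠ 0 := by positivity
        field_simp
        ring
      have hmain : Filter.Tendsto
          (fun lam : ℝ => C / Real.sqrt N * ((1 + Real.sqrt lam) / (1 + lam))
            + I * (lam / (1 + lam))) Filter.atTop (nhds I) := by
        have hadd := ((hfrac1.const_mul (C / Real.sqrt N)).add (hfrac2.const_mul I))
        simpa using hadd
      refine Filter.Tendsto.congr' ?_ hmain
      filter_upwards [Filter.eventually_gt_atTop (0:ℝ)] with lam hlam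
      have h1 : (1 + lam) ≠ 0 := by positivity
      show C / Real.sqrt N * ((1 + Real.sqrt lam) / (1 + lam)) + I * (lam / (1 + lam))
        = C * (1 + Real.sqrt lam) / ((1 + lam) * Real.sqrt N) + I * lam / (1 + lam)
      field_simp
    · intro lam hlam
      have hs : 0 ≤ Real.sqrt lam := Real.sqrt_nonneg lam
      have h1 : (0:ℝ) < 1 + lam := by linarith
      show I < C * (1 + Real.sqrt lam) / ((1 + lam) * Real.sqrt N) + I * lam / (1 + lam)
      rw [div_add_div _ _ (by positivity) (ne_of_gt h1), lt_div_iff₀ (by positivity)]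
      have hred : I * Real.sqrt N < C * (1 + Real.sqrt lam) + Real.sqrt N * (I * lam) -
          I * lam * Real.sqrt N := by
        nlinarith [mul_nonneg hC.le hs]
      nlinarith [mul_lt_mul_of_pos_left hred h1]
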